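/- Let f, g : ℝ → ℝ² both be injective and continuous on [0,1] with the same image, f '' (Set.Icc 0 1) = g '' (Set.Icc 0 1). Then f and g have the same length: eVariationOn f (Set.Icc 0 1) = eVariationOn g (Set.Icc 0 1). Hence the length of a simple curve is independent of the choice of injective parametrization. (The invariance of curve length asserted in Section 2, on which the definition of the length l(C) of a simple curve rests.) -/

import Mathlib

local notation "ℝ²" => EuclideanSpace ℝ (Fin 2)

/-- The length of a simple curve is independent of the choice of injective
parametrization. -/
theorem stmt_13 (f g : ℝ → ℝ²)
    (hfi : Set.InjOn f (Set.Icc 0 1)) (hfc : ContinuousOn f (Set.Icc 0 1))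
    (hgi : Set.InjOn g (Set.Icc 0 1)) (hgc : ContinuousOn g (Set.Icc 0 1))
    (himg : f '' Set.Icc 0 1 = g '' Set.Icc 0 1) :
    eVariationOn f (Set.Icc 0 1) = eVariationOn g (Set.Icc 0 1) := by
  set K : Set ℝ := Set.Icc 0 1 with hKdef
  haveI : CompactSpace K := isCompact_iff_compactSpace.mp isCompact_Icc
  set F : K → ℝ² := K.restrict f with hF
  set G : K → ℝ² := K.restrict g with hG
  have hFc : Continuous F := hfc.restrict
  have hGc : Continuous G := hgc.restrict
  have hFe : Topology.IsEmbedding F := (hFc.isClosedEmbedding hfi.injective).toIsEmbedding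
  have hGe : Topology.IsEmbedding G := (hGc.isClosedEmbedding hgi.injective).toIsEmbedding
  have hr : Set.range F = Set.range G := by
    rw [hF, hG]
    exact (Set.range_domRestrict f K).trans (himg.trans (Set.range_domRestrict g K).symm)
  set eF := hFe.toHomeomorph with heF
  set eG := hGe.toHomeomorph with heG
  set Φ : K ≃ₜ K := eF.trans ((Homeomorph.setCongr hr).trans eG.symm) with hΦ
  have hGΦ : ∀ x : K, G (Φ x) = F x := by
    intro x
    have : (eG (Φ x) : ℝ²) = ((Homeomorph.setCongr hr) (eF x) : ℝ²) := by
      simp [hΦ]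
    simpa [heG, heF, Topology.IsEmbedding.toHomeomorph, Homeomorph.setCongr] using this
  classical
  set φ : ℝ → ℝ := fun t => if h : t ∈ K then (Φ ⟨t, h⟩ : ℝ) else 0 with hφdef
  have hφmem : ∀ t (h : t ∈ K), φ t = (Φ ⟨t, h⟩ : ℝ) := fun t h => dif_pos h
  have hgφ : ∀ t ∈ K, g (φ t) = f t := by
    intro t ht
    rw [hφmem t ht]
    exact hGΦ ⟨t, ht⟩
  have hφinj : Set.InjOn φ K := by
    intro a ha b hb hab
    rw [hφmem a ha, hφmem b hb] at hab
    have := Φ.injective (Subtype.ext hab)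
    exact congrArg Subtype.val this
  have hφc : ContinuousOn φ K := by
    rw [continuousOn_iff_continuous_restrict]
    have : K.restrict φ = fun x : K => (Φ x : ℝ) := by
      funext x
      simp [Set.restrict, hφmem x.1 x.2]
    rw [show K.domRestrict φ = fun x : K => (Φ x : ℝ) from this]
    exact continuous_subtype_val.comp Φ.continuous
  have hφimg : φ '' K = K := by
    apply Set.Subset.antisymm
    · rintro _ ⟨t, ht, rfl⟩
      rw [hφmem t ht]
      exact (Φ ⟨t, ht⟩).2
    · intro s hs
      refine ⟨(Φ.symm ⟨s, hs⟩ : ℝ), (Φ.symm ⟨s, hs⟩).2, ?_⟩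
      rw [hφmem _ (Φ.symm ⟨s, hs⟩).2]
      have : (⟨(Φ.symm ⟨s, hs⟩ : ℝ), (Φ.symm ⟨s, hs⟩).2⟩ : K) = Φ.symm ⟨s, hs⟩ := rfl
      rw [this, Φ.apply_symm_apply]
  have hfg : eVariationOn f K = eVariationOn (g ∘ φ) K :=
    eVariationOn.eq_of_eqOn (fun t ht => (hgφ t ht).symm)
  rcases ContinuousOn.strictMonoOn_of_injOn_Icc' (by norm_num : (0:ℝ) ≤ 1) hφc hφinj with h | h
  · rw [hfg, eVariationOn.comp_eq_of_monotoneOn g φ h.monotoneOn, hφimg]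
  · rw [hfg, eVariationOn.comp_eq_of_antitoneOn g φ h.antitoneOn, hφimg]
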